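/- Let k be an algebraically closed field, n ≥ 1, f ∈ k[x₁] a nonzero polynomial, and G a finite subset of k[x₁,...,xₙ]. If the ideal of k[x₁,...,xₙ] generated by {f} ∪ G is proper, then there exists a ∈ k with f(a) = 0 such that the ideal generated by {x₁ − a} ∪ G is proper. -/

import Mathlib

open MvPolynomial

/-- The canonical embedding `k[x₁] → k[x₁,…,xₙ]`. -/
noncomputable def univEmb (k : Type*) [CommSemiring k] (n : ℕ) :
    Polynomial k →ₐ[k] MvPolynomial (Fin (n + 1)) k :=
  Polynomial.aeval (X 0)

/-- Corollary: over an algebraically closed field, if `f ∈ k[x₁]` is nonzero, `G` finite,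
and `⟨f, G⟩` is a proper ideal of `k[x₁,…,xₙ]` (here `n + 1 ≥ 1` variables), then there is a
root `a` of `f` with `⟨x₁ - a, G⟩` proper. -/
theorem exists_root_span_proper {k : Type*} [Field k] [IsAlgClosed k] (n : ℕ)
    (f : Polynomial k) (hf : f ≠ 0)
    (G : Finset (MvPolynomial (Fin (n + 1)) k))
    (hI : Ideal.span (insert (univEmb k n f) (G : Set (MvPolynomial (Fin (n + 1)) k))) ≠ ⊤) :
    ∃ a : k, f.eval a = 0 ∧
      Ideal.span (insert (X 0 - C a) (G : Set (MvPolynomial (Fin (n + 1)) k))) ≠ ⊤ := by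
  obtain ⟨m, hm, hle⟩ := Ideal.exists_le_maximal _ hI
  obtain ⟨x, hx⟩ := (isMaximal_iff_eq_vanishingIdeal_singleton (I := m)).1 hm
  refine ⟨x 0, ?_, ?_⟩
  · have hmem : univEmb k n f ∈ m := hle (Ideal.subset_span (Set.mem_insert _ _))
    rw [hx, mem_vanishingIdeal_singleton_iff] at hmem
    have : (eval x) (univEmb k n f) = f.eval (x 0) := by
      simp only [univEmb, Polynomial.aeval_def, Polynomial.hom_eval₂]
      rw [show ((eval x).comp (algebraMap k (MvPolynomial (Fin (n + 1)) k)) : k →+* k) = RingHom.id k from RingHom.ext fun c => by simp]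
      simp [Polynomial.eval₂_id]
    rw [← this]; exact hmem
  · intro htop
    have hsub : Ideal.span (insert (X 0 - C (x 0)) (G : Set (MvPolynomial (Fin (n + 1)) k))) ≤ m := by
      rw [Ideal.span_le, hx]
      rintro p (rfl | hp)
      · rw [SetLike.mem_coe, mem_vanishingIdeal_singleton_iff]; simp
      · exact hx ▸ hle (Ideal.subset_span (Set.mem_insert_of_mem _ hp))
    rw [htop] at hsub
    exact hm.ne_top (top_le_iff.mp hsub)
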